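/- Define the following vectors of ℂ^B: for each row r ∉ {i,j} the vectors b_{r,1}, …, b_{r,μ_r}; the vectors v_0 := b_{j,1}, v_t := t·b_{i,t} + b_{j,t+1} for 1 ≤ t ≤ μ_j − 1, and v_t := μ_j·b_{i,t} for μ_j ≤ t ≤ μ_i; and the vectors w_t := (μ_j − t)·b_{i,t} − b_{j,t+1} for 1 ≤ t ≤ μ_j − 1. Then: e_2 b_{r,s} = b_{r,s+1} for r ∉ {i,j} and s < μ_r, and e_2 b_{r,μ_r} = 0; e_2 v_t = v_{t+1} for 0 ≤ t ≤ μ_i − 1, and e_2 v_{μ_i} = 0; e_2 w_t = w_{t+1} for 1 ≤ t ≤ μ_j − 2, and e_2 w_{μ_j−1} = 0. Moreover all of these vectors together form a basis of ℂ^B, so they constitute Jordan chains for e_2 of lengths μ_r (for r ∉ {i,j}), μ_i + 1 = λ_i, and μ_j − 1 = λ_j. -/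

import Mathlib

open Matrix

/-- The boxes of the right-aligned Young diagram of `μ` (0-based: box `⟨r, s⟩`
corresponds to the box in row `r+1`, `s+1`-th from the right end of its row). -/
abbrev Box (k : ℕ) (μ : Fin k → ℕ) := (r : Fin k) × Fin (μ r)

/-- The nilpotent `e₁` of Jordan type `μ`, sending `b_{r,s} ↦ b_{r,s+1}`. -/
noncomputable def e1 (k : ℕ) (μ : Fin k → ℕ) : Matrix (Box k μ) (Box k μ) ℂ :=
  Matrix.of fun t u => if t.1 = u.1 ∧ t.2.val = u.2.val + 1 then 1 else 0

/-- The nilpotent `e₂ = e₁ + Σ_{s=1}^{μ_j} E_{(i,s),(j,s)}`. -/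
noncomputable def e2 (k : ℕ) (μ : Fin k → ℕ) (i j : Fin k) : Matrix (Box k μ) (Box k μ) ℂ :=
  e1 k μ + Matrix.of fun t u => if t.1 = i ∧ u.1 = j ∧ t.2.val = u.2.val then 1 else 0

/-- `E_m := Σ_{r=i}^{j−m} Σ_{s=1}^{μ_{r+m}} E_{(r+m,s),(r,s)}`. -/
noncomputable def Em (k : ℕ) (μ : Fin k → ℕ) (i j : Fin k) (m : ℕ) :
    Matrix (Box k μ) (Box k μ) ℂ :=
  Matrix.of fun t u =>
    if i ≤ u.1 ∧ t.1 ≤ j ∧ t.1.val = u.1.val + m ∧ t.2.val = u.2.val then 1 else 0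

/-- `m₁ := span{E_{t,u} : s_t < s_u}`. -/
noncomputable def m1 (k : ℕ) (μ : Fin k → ℕ) : Submodule ℂ (Matrix (Box k μ) (Box k μ) ℂ) :=
  Submodule.span ℂ
    {x | ∃ t u : Box k μ, t.2.val < u.2.val ∧ x = Matrix.single t u 1}

/-- `k := span{E_1, …, E_{j−i}}`. -/
noncomputable def fk (k : ℕ) (μ : Fin k → ℕ) (i j : Fin k) :
    Submodule ℂ (Matrix (Box k μ) (Box k μ) ℂ) :=
  Submodule.span ℂ {x | ∃ m : ℕ, 1 ≤ m ∧ m ≤ j.val - i.val ∧ x = Em k μ i j m}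

/-- `m₂ := m₁ + k`. -/
noncomputable def m2 (k : ℕ) (μ : Fin k → ℕ) (i j : Fin k) :
    Submodule ℂ (Matrix (Box k μ) (Box k μ) ℂ) :=
  m1 k μ ⊔ fk k μ i j

/-- The covering partition `λ`. -/
def lam (k : ℕ) (μ : Fin k → ℕ) (i j : Fin k) : Fin k → ℕ :=
  fun r => if r = i then μ i + 1 else if r = j then μ j - 1 else μ r

/-- `χ_a(x) = Tr(e_a x)`. -/
noncomputable def chi (k : ℕ) (μ : Fin k → ℕ) (ea x : Matrix (Box k μ) (Box k μ) ℂ) : ℂ :=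
  (ea * x).trace

/-- The standard basis vector `b_{r,s}` of `ℂ^B` (1-based `s`; zero if out of range). -/
noncomputable def bb (k : ℕ) (μ : Fin k → ℕ) (r : Fin k) (s : ℕ) : Box k μ → ℂ :=
  fun p => if p.1 = r ∧ p.2.val + 1 = s then 1 else 0

/-- The Jordan-chain vectors `v_t`: `v_0 = b_{j,1}`, `v_t = t·b_{i,t} + b_{j,t+1}` for
`1 ≤ t ≤ μ_j − 1`, and `v_t = μ_j·b_{i,t}` for `μ_j ≤ t ≤ μ_i`. -/
noncomputable def vv (k : ℕ) (μ : Fin k → ℕ) (i j : Fin k) (t : ℕ) : Box k μ → ℂ :=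
  if t = 0 then bb k μ j 1
  else ((min t (μ j) : ℕ) : ℂ) • bb k μ i t + bb k μ j (t + 1)

/-- The Jordan-chain vectors `w_t := (μ_j − t)·b_{i,t} − b_{j,t+1}` for
`1 ≤ t ≤ μ_j − 1`. -/
noncomputable def ww (k : ℕ) (μ : Fin k → ℕ) (i j : Fin k) (t : ℕ) : Box k μ → ℂ :=
  ((μ j - t : ℕ) : ℂ) • bb k μ i t - bb k μ j (t + 1)


section Helpers

lemma bb_single (k : ℕ) (μ : Fin k → ℕ) (p : Box k μ) :
    bb k μ p.1 (p.2.val + 1) = Pi.single p 1 := by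
  funext q
  rcases p with ⟨r, s⟩; rcases q with ⟨r', s'⟩
  simp only [bb]
  rcases eq_or_ne (⟨r', s'⟩ : Box k μ) ⟨r, s⟩ with h | h
  · cases h; simp
  · rw [Pi.single_eq_of_ne h]
    rw [if_neg]
    rintro ⟨h1, h2⟩
    subst h1
    exact h (by simpa [Fin.ext_iff] using h2)

lemma bb_oob (k : ℕ) (μ : Fin k → ℕ) (r : Fin k) (s : ℕ) (h : μ r < s ∨ s = 0) :
    bb k μ r s = 0 := by
  funext p
  simp only [bb, Pi.zero_apply]
  rw [if_neg]
  rintro ⟨h1, h2⟩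
  subst h1
  omega

lemma key (k : ℕ) (μ : Fin k → ℕ) (i j : Fin k) (hij : i ≠ j) (r : Fin k) (s : ℕ) (hs : 1 ≤ s) :
    (e2 k μ i j).mulVec (bb k μ r s) =
      bb k μ r (s + 1) + (if r = j ∧ s ≤ μ r then bb k μ i s else 0) := by
  by_cases hle : s ≤ μ r
  · have hlt : s - 1 < μ r := by omega
    have hb : bb k μ r s = Pi.single (⟨r, ⟨s - 1, hlt⟩⟩ : Box k μ) 1 := by
      have := bb_single k μ ⟨r, ⟨s - 1, hlt⟩⟩
      simpa [Nat.sub_add_cancel hs] using this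
    rw [hb]
    funext p
    rcases p with ⟨pr, ps⟩
    rw [Matrix.mulVec_single]
    simp only [e2, e1, Matrix.add_apply, Matrix.of_apply, Pi.add_apply, mul_one, ite_apply,
      Pi.zero_apply, bb, Pi.smul_apply, Matrix.col_apply, MulOpposite.smul_eq_mul_unop,
      MulOpposite.unop_op]
    have ea : ((ps:ℕ) = s - 1 + 1) ↔ ((ps:ℕ) + 1 = s + 1) := by omega
    have eb : ((ps:ℕ) = s - 1) ↔ ((ps:ℕ) + 1 = s) := by omega
    simp only [ea, eb]
    by_cases hrj : r = j
    · simp [hrj, hle, hrj ▸ hle]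
    · simp [hrj]
  · rw [bb_oob k μ r s (Or.inl (by omega)), Matrix.mulVec_zero,
      bb_oob k μ r (s+1) (Or.inl (by omega)), if_neg (by tauto), add_zero]

variable {k : ℕ} {μ : Fin k → ℕ} {i j : Fin k}

lemma e2_vv (hij : i ≠ j) (hpj : 1 ≤ μ j) (t : ℕ) :
    (e2 k μ i j).mulVec (vv k μ i j t) = vv k μ i j (t + 1) := by
  rcases Nat.eq_zero_or_pos t with rfl | ht
  · rw [show vv k μ i j 0 = bb k μ j 1 from if_pos rfl,
      key k μ i j hij j 1 le_rfl, if_pos ⟨rfl, hpj⟩]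
    rw [show vv k μ i j 1 = ((min 1 (μ j) : ℕ) : ℂ) • bb k μ i 1 + bb k μ j 2 from
      if_neg one_ne_zero]
    rw [min_eq_left hpj]
    push_cast
    rw [one_smul]
    abel
  · rw [show vv k μ i j t = ((min t (μ j) : ℕ) : ℂ) • bb k μ i t + bb k μ j (t + 1) from
      if_neg (by omega),
      show vv k μ i j (t+1) = ((min (t+1) (μ j) : ℕ) : ℂ) • bb k μ i (t+1) + bb k μ j (t + 2)
        from if_neg (by omega)]
    rw [Matrix.mulVec_add, Matrix.mulVec_smul,
      key k μ i j hij i t ht, key k μ i j hij j (t+1) (by omega),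
      if_neg (fun h => hij h.1), add_zero]
    by_cases hc : t + 1 ≤ μ j
    · rw [if_pos ⟨rfl, hc⟩, min_eq_left (by omega), min_eq_left hc]
      push_cast
      rw [add_smul, one_smul]
      abel
    · rw [if_neg (fun h => hc h.2), min_eq_right (by omega), min_eq_right (by omega), add_zero]

lemma e2_ww (hij : i ≠ j) (t : ℕ) (ht : 1 ≤ t) :
    (e2 k μ i j).mulVec (ww k μ i j t) = ww k μ i j (t + 1) := by
  rw [ww, ww, Matrix.mulVec_sub, Matrix.mulVec_smul,
    key k μ i j hij i t ht, key k μ i j hij j (t+1) (by omega),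
    if_neg (fun h => hij h.1), add_zero]
  by_cases hc : t + 1 ≤ μ j
  · rw [if_pos ⟨rfl, hc⟩, show ((μ j - t : ℕ) : ℂ) = ((μ j - (t+1) : ℕ) : ℂ) + 1 by
      rw [Nat.cast_sub (by omega), Nat.cast_sub (by omega)]; push_cast; ring]
    rw [add_smul, one_smul]
    abel
  · rw [if_neg (fun h => hc h.2), Nat.sub_eq_zero_of_le (by omega),
      Nat.sub_eq_zero_of_le (by omega)]
    abel

end Helpers

/-- The vectors `b_{r,s}` (`r ∉ {i,j}`), `v_0, …, v_{μ_i}` and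
`w_1, …, w_{μ_j−1}` form Jordan chains for `e₂` of lengths `μ_r`, `λ_i = μ_i + 1` and
`λ_j = μ_j − 1`, and all together form a basis of `ℂ^B`. -/
theorem stmt8
    (k : ℕ) (n : ℕ) (μ : Fin k → ℕ)
    (hpos : ∀ r, 0 < μ r) (hanti : Antitone μ)
    (hn : ∑ r : Fin k, μ r = n)
    (i j : Fin k) (hij : i < j)
    (hi : ∀ r, r < i → μ i < μ r)
    (hj : ∀ r, j < r → μ r < μ j)
    (hcase : (j : ℕ) = (i : ℕ) + 1 ∨ μ i = μ j)
    :
    (∀ r : Fin k, r ≠ i → r ≠ j →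
      (∀ s : ℕ, 1 ≤ s → s < μ r →
        (e2 k μ i j).mulVec (bb k μ r s) = bb k μ r (s + 1)) ∧
      (e2 k μ i j).mulVec (bb k μ r (μ r)) = 0)
    ∧ (∀ t : ℕ, t < μ i → (e2 k μ i j).mulVec (vv k μ i j t) = vv k μ i j (t + 1))
    ∧ (e2 k μ i j).mulVec (vv k μ i j (μ i)) = 0
    ∧ (∀ t : ℕ, 1 ≤ t → t + 2 ≤ μ j →
        (e2 k μ i j).mulVec (ww k μ i j t) = ww k μ i j (t + 1))
    ∧ (2 ≤ μ j → (e2 k μ i j).mulVec (ww k μ i j (μ j - 1)) = 0)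
    ∧ ∃ basis : Module.Basis ((r : Fin k) × Fin (lam k μ i j r)) ℂ (Box k μ → ℂ),
        ∀ p : (r : Fin k) × Fin (lam k μ i j r),
          (basis p : Box k μ → ℂ) =
            if p.1 = i then vv k μ i j p.2.val
            else if p.1 = j then ww k μ i j (p.2.val + 1)
            else bb k μ p.1 (p.2.val + 1) := by
  classical
  have hne : i ≠ j := hij.ne
  have hpj : 1 ≤ μ j := hpos j
  have hpi : 1 ≤ μ i := hpos i
  have hji : μ j ≤ μ i := hanti hij.le
  refine ⟨?_, ?_, ?_, ?_, ?_, ?_⟩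
  · -- rows other than i, j
    intro r hri hrj
    constructor
    · intro s hs hsr
      rw [key k μ i j hne r s hs, if_neg (fun h => hrj h.1), add_zero]
    · rw [key k μ i j hne r (μ r) (hpos r), if_neg (fun h => hrj h.1), add_zero,
        bb_oob k μ r (μ r + 1) (Or.inl (by omega))]
  · intro t _
    exact e2_vv hne hpj t
  · rw [e2_vv hne hpj (μ i)]
    rw [show vv k μ i j (μ i + 1)
        = ((min (μ i + 1) (μ j) : ℕ) : ℂ) • bb k μ i (μ i + 1) + bb k μ j (μ i + 2) from
      if_neg (by omega)]
    rw [bb_oob k μ i (μ i + 1) (Or.inl (by omega)),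
      bb_oob k μ j (μ i + 2) (Or.inl (by omega)), smul_zero, add_zero]
  · intro t ht _
    exact e2_ww hne t ht
  · intro h2
    rw [e2_ww hne (μ j - 1) (by omega), show μ j - 1 + 1 = μ j by omega, ww,
      Nat.sub_self, Nat.cast_zero, zero_smul,
      bb_oob k μ j (μ j + 1) (Or.inl (by omega)), zero_sub, neg_zero]
  · -- the basis
    set f : ((r : Fin k) × Fin (lam k μ i j r)) → (Box k μ → ℂ) := fun p =>
      if p.1 = i then vv k μ i j p.2.val
      else if p.1 = j then ww k μ i j (p.2.val + 1)
      else bb k μ p.1 (p.2.val + 1) with hf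
    set S : Submodule ℂ (Box k μ → ℂ) := Submodule.span ℂ (Set.range f) with hS
    have hvS : ∀ t : ℕ, t ≤ μ i → vv k μ i j t ∈ S := by
      intro t ht
      refine Submodule.subset_span ⟨⟨i, ⟨t, ?_⟩⟩, ?_⟩
      · simp [lam]; omega
      · simp [hf]
    have hwS : ∀ t : ℕ, 1 ≤ t → t < μ j → ww k μ i j t ∈ S := by
      intro t ht htj
      obtain ⟨u, rfl⟩ : ∃ u, t = u + 1 := ⟨t - 1, by omega⟩
      refine Submodule.subset_span ⟨⟨j, ⟨u, ?_⟩⟩, ?_⟩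
      · simp [lam, hne.symm]; omega
      · simp [hf, hne.symm]
    have hbiS : ∀ t : ℕ, 1 ≤ t → t ≤ μ i → bb k μ i t ∈ S := by
      intro t ht hti
      have hμj : ((μ j : ℕ) : ℂ) ≠ 0 := by exact_mod_cast (hpos j).ne'
      by_cases hc : t < μ j
      · have h1 : vv k μ i j t + ww k μ i j t = ((μ j : ℕ) : ℂ) • bb k μ i t := by
          rw [show vv k μ i j t
              = ((min t (μ j) : ℕ) : ℂ) • bb k μ i t + bb k μ j (t + 1) from
            if_neg (by omega), ww, min_eq_left hc.le,
            show ((μ j : ℕ) : ℂ) = (t : ℂ) + ((μ j - t : ℕ) : ℂ) by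
              rw [Nat.cast_sub hc.le]; ring, add_smul]
          abel
        have h2 : bb k μ i t = ((μ j : ℕ) : ℂ)⁻¹ • (vv k μ i j t + ww k μ i j t) := by
          rw [h1, inv_smul_smul₀ hμj]
        rw [h2]
        exact Submodule.smul_mem _ _ (Submodule.add_mem _ (hvS t hti) (hwS t ht hc))
      · have h1 : vv k μ i j t = ((μ j : ℕ) : ℂ) • bb k μ i t := by
          rw [show vv k μ i j t
              = ((min t (μ j) : ℕ) : ℂ) • bb k μ i t + bb k μ j (t + 1) from
            if_neg (by omega), min_eq_right (by omega),
            bb_oob k μ j (t + 1) (Or.inl (by omega)), add_zero]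
        have h2 : bb k μ i t = ((μ j : ℕ) : ℂ)⁻¹ • vv k μ i j t := by
          rw [h1, inv_smul_smul₀ hμj]
        rw [h2]
        exact Submodule.smul_mem _ _ (hvS t hti)
    have hbjS : ∀ s : ℕ, 1 ≤ s → s ≤ μ j → bb k μ j s ∈ S := by
      intro s hs hsj
      rcases Nat.exists_eq_add_of_le hs with ⟨t, rfl⟩
      rcases Nat.eq_zero_or_pos t with rfl | ht
      · have : bb k μ j 1 = vv k μ i j 0 := (if_pos rfl).symm
        rw [this]
        exact hvS 0 (by omega)
      · have h1 : bb k μ j (1 + t)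
            = vv k μ i j t - ((min t (μ j) : ℕ) : ℂ) • bb k μ i t := by
          rw [show vv k μ i j t
              = ((min t (μ j) : ℕ) : ℂ) • bb k μ i t + bb k μ j (t + 1) from
            if_neg (by omega), show 1 + t = t + 1 by omega]
          abel
        rw [h1]
        exact Submodule.sub_mem _ (hvS t (by omega))
          (Submodule.smul_mem _ _ (hbiS t ht (by omega)))
    have hstd : ∀ p : Box k μ, Pi.single p 1 ∈ S := by
      intro p
      rw [← bb_single]
      rcases p with ⟨r, s⟩
      dsimp only
      by_cases hri : r = i
      · subst hri
        exact hbiS (s.val + 1) (by omega) (by omega)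
      · by_cases hrj : r = j
        · subst hrj
          exact hbjS (s.val + 1) (by omega) (by omega)
        · refine Submodule.subset_span ⟨⟨r, ⟨s.val, ?_⟩⟩, ?_⟩
          · simp only [lam, if_neg hri, if_neg hrj]; exact s.isLt
          · simp only [hf, if_neg hri, if_neg hrj]
    have hspan : ⊤ ≤ Submodule.span ℂ (Set.range f) := by
      rw [← hS]
      intro x _
      have hx : x = ∑ p : Box k μ, x p • (Pi.single p 1 : Box k μ → ℂ) := by
        funext q
        rw [Finset.sum_apply, Finset.sum_eq_single q]
        · simp
        · intro b _ hb
          simp [Pi.single_eq_of_ne (Ne.symm hb)]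
        · intro h
          exact absurd (Finset.mem_univ q) h
      rw [hx]
      exact Submodule.sum_mem _ fun p _ => Submodule.smul_mem _ _ (hstd p)
    have hsum : ∑ r : Fin k, lam k μ i j r = ∑ r : Fin k, μ r := by
      have hz : ∀ r : Fin k, (lam k μ i j r : ℤ)
          = (μ r : ℤ) + (if r = i then 1 else 0) - (if r = j then 1 else 0) := by
        intro r
        simp only [lam]
        split_ifs with h1 h2 h3
        · exact absurd (h1 ▸ h2) hne
        · subst h1; push_cast; ring
        · subst h3; rw [Nat.cast_sub hpj]; push_cast; ring
        · ring
      have h2 : (∑ r : Fin k, (lam k μ i j r : ℤ)) = ∑ r : Fin k, (μ r : ℤ) := by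
        simp_rw [hz]
        rw [Finset.sum_sub_distrib, Finset.sum_add_distrib]
        simp
      exact_mod_cast h2
    have hcard : Fintype.card ((r : Fin k) × Fin (lam k μ i j r))
        = Module.finrank ℂ (Box k μ → ℂ) := by
      rw [Module.finrank_pi]
      simp only [Fintype.card_sigma, Fintype.card_fin]
      exact hsum
    refine ⟨basisOfTopLeSpanOfCardEqFinrank f hspan hcard, fun p => ?_⟩
    rw [coe_basisOfTopLeSpanOfCardEqFinrank]
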